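/- arXiv:1804.09040 — 3 statements merged into one kernel-verified Lean document; each statement's English description precedes it below -/
import Mathlib

section
/- Fix binary values w_{k,i} ∈ {0,1} with Σ_k w_{k,i} = 1 for every slot i. Then a power matrix P with P_{k,i} ≥ 0 satisfies the constraints τ·P_{k,1} ≤ w_{k,1}·E₀ᵏ, τ·P_{k,i} ≤ w_{k,i}·(E₀ᵏ + Σ_{j=1}^M E_H^{k,j}) for i ≥ 2, and Σ_{j=1}^i τ·P_{k,j} ≤ E₀ᵏ + Σ_{j=1}^{i-1}(1 − w_{k,j})·E_H^{k,j} for i ≥ 2, if and only if it satisfies the coupled constraints τ·w_{k,1}·P_{k,1} ≤ E₀ᵏ and Σ_{j=1}^i τ·w_{k,j}·P_{k,j} ≤ E₀ᵏ + Σ_{j=1}^{i-1}(1 − w_{k,j})·E_H^{k,j} for i ≥ 2, together with P_{k,i} = 0 whenever w_{k,i} = 0. -/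
theorem stmt_5 (K M : ℕ) (hM : 0 < M) (τ : ℝ) (hτ : 0 < τ)
    (E0 : Fin K → ℝ) (hE0 : ∀ k, 0 ≤ E0 k)
    (EH : Fin K → Fin M → ℝ) (hEH : ∀ k j, 0 ≤ EH k j)
    (w : Fin K → Fin M → ℝ)
    (hw01 : ∀ k i, w k i = 0 ∨ w k i = 1)
    (hwsum : ∀ i, ∑ k, w k i = 1)
    (P : Fin K → Fin M → ℝ) (hP : ∀ k i, 0 ≤ P k i) :
    ((∀ k, τ * P k ⟨0, hM⟩ ≤ w k ⟨0, hM⟩ * E0 k) ∧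
     (∀ k (i : Fin M), 1 ≤ i.val →
        τ * P k i ≤ w k i * (E0 k + ∑ j, EH k j)) ∧
     (∀ k (i : Fin M), 1 ≤ i.val →
        ∑ j ∈ Finset.Iic i, τ * P k j ≤
          E0 k + ∑ j ∈ Finset.Iio i, (1 - w k j) * EH k j))
    ↔
    ((∀ k, τ * w k ⟨0, hM⟩ * P k ⟨0, hM⟩ ≤ E0 k) ∧
     (∀ k (i : Fin M), 1 ≤ i.val →
        ∑ j ∈ Finset.Iic i, τ * w k j * P k j ≤
          E0 k + ∑ j ∈ Finset.Iio i, (1 - w k j) * EH k j) ∧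
     (∀ k i, w k i = 0 → P k i = 0)) := by
  constructor
  · rintro ⟨h1, h2, h3⟩
    have hz : ∀ k i, w k i = 0 → P k i = 0 := by
      intro k i hwi
      rcases Nat.eq_zero_or_pos i.val with h0 | hpos
      · have hi : i = ⟨0, hM⟩ := Fin.ext h0
        subst hi
        have := h1 k
        rw [hwi] at this
        nlinarith [hP k (⟨0, hM⟩ : Fin M)]
      · have := h2 k i hpos
        rw [hwi] at this
        nlinarith [hP k i]
    have heq : ∀ k j, τ * w k j * P k j = τ * P k j := by
      intro k j
      rcases hw01 k j with h | h
      · rw [h, hz k j h]; ring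
      · rw [h]; ring
    refine ⟨fun k => ?_, fun k i hi => ?_, hz⟩
    · rw [heq]
      calc τ * P k ⟨0, hM⟩ ≤ w k ⟨0, hM⟩ * E0 k := h1 k
        _ ≤ E0 k := by
          rcases hw01 k ⟨0, hM⟩ with h | h <;> rw [h] <;> nlinarith [hE0 k]
    · calc ∑ j ∈ Finset.Iic i, τ * w k j * P k j
          = ∑ j ∈ Finset.Iic i, τ * P k j :=
            Finset.sum_congr rfl (fun j _ => heq k j)
        _ ≤ _ := h3 k i hi
  · rintro ⟨h1, h3, hz⟩
    have heq : ∀ k j, τ * w k j * P k j = τ * P k j := by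
      intro k j
      rcases hw01 k j with h | h
      · rw [h, hz k j h]; ring
      · rw [h]; ring
    have hnn : ∀ k j, 0 ≤ τ * w k j * P k j := by
      intro k j
      rcases hw01 k j with h | h <;> rw [h] <;> nlinarith [hP k j, hτ.le]
    refine ⟨fun k => ?_, fun k i hi => ?_, fun k i hi => ?_⟩
    · rcases hw01 k ⟨0, hM⟩ with h | h
      · rw [h, hz k _ h]; simp
      · have := h1 k; rw [h] at this ⊢; linarith
    · rcases hw01 k i with h | h
      · rw [h, hz k i h]; simp
      · rw [h, one_mul]
        have hcum := h3 k i hi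
        have hterm : τ * w k i * P k i ≤ ∑ j ∈ Finset.Iic i, τ * w k j * P k j :=
          Finset.single_le_sum (fun j _ => hnn k j) (Finset.mem_Iic.mpr le_rfl)
        have hRHS : ∑ j ∈ Finset.Iio i, (1 - w k j) * EH k j ≤ ∑ j, EH k j := by
          calc ∑ j ∈ Finset.Iio i, (1 - w k j) * EH k j
              ≤ ∑ j ∈ Finset.Iio i, EH k j := by
                apply Finset.sum_le_sum
                intro j _
                rcases hw01 k j with h' | h' <;> rw [h'] <;> nlinarith [hEH k j]
            _ ≤ ∑ j, EH k j := by
                apply Finset.sum_le_sum_of_subset_of_nonneg (Finset.subset_univ _)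
                intro j _ _; exact hEH k j
        rw [h, mul_one] at hterm
        linarith
    · calc ∑ j ∈ Finset.Iic i, τ * P k j
          = ∑ j ∈ Finset.Iic i, τ * w k j * P k j :=
            Finset.sum_congr rfl (fun j _ => (heq k j).symm)
        _ ≤ _ := h3 k i hi
end

section
/- Consider maximizing Σ_{i=1}^M log₂(1 + h_i·P_i/σ²) over P_i ≥ 0 subject to Σ_{j=1}^i τ·P_j ≤ E_i for i = 1,…,M, where 0 ≤ E_1 ≤ E_2 ≤ … ≤ E_M (cumulative available energy). Then any optimal solution P* satisfies the KKT water-filling form: there exist nonnegative multipliers θ_1,…,θ_M (θ_i associated with the i-th cumulative constraint) such that P*_i = max{0, 1/(ln 2 · τ · Σ_{j=i}^M θ_j) − σ²/h_i} for each i with h_i > 0, and complementary slackness θ_i·(Σ_{j=1}^i τ·P*_j − E_i) = 0 holds. -/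
lemma swap_key (σ2 : ℝ) (hσ : 0 < σ2) (ha hb : ℝ) (hha : 0 < ha) (hhb : 0 < hb)
    (Pa Pb : ℝ) (hPa : 0 < Pa) (hPb : 0 ≤ Pb) (ε0 : ℝ) (hε0 : 0 < ε0)
    (hineq : ∀ ε : ℝ, 0 < ε → ε ≤ Pa → ε ≤ ε0 →
      Real.logb 2 (1 + hb*(Pb+ε)/σ2) - Real.logb 2 (1 + hb*Pb/σ2) ≤
        Real.logb 2 (1 + ha*Pa/σ2) - Real.logb 2 (1 + ha*(Pa-ε)/σ2)) :
    hb * (σ2 + ha * Pa) ≤ ha * (σ2 + hb * Pb) := by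
  have hL : (0:ℝ) < Real.log 2 := Real.log_pos one_lt_two
  apply le_of_forall_pos_le_add
  intro δ hδ
  set ε : ℝ := min (min Pa ε0) (δ / (2 * ha * hb)) with hεdef
  have hεpos : 0 < ε := by
    apply lt_min (lt_min hPa hε0)
    positivity
  have hε1 : ε ≤ Pa := le_trans (min_le_left _ _) (min_le_left _ _)
  have hε2 : ε ≤ ε0 := le_trans (min_le_left _ _) (min_le_right _ _)
  have hε3 : ε ≤ δ / (2 * ha * hb) := min_le_right _ _
  have key := hineq ε hεpos hε1 hε2
  set u : ℝ := σ2 + hb * Pb with hu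
  set v : ℝ := σ2 + ha * Pa with hv
  have hupos : 0 < u := by have := mul_nonneg hhb.le hPb; simp [hu]; linarith
  have hvpos : 0 < v := by nlinarith
  have hv' : 0 < v - ha * ε := by
    have : ha * ε ≤ ha * Pa := by nlinarith
    simp [hv]; nlinarith
  have hu' : 0 < u + hb * ε := by positivity
  have e1 : (1 + hb*(Pb+ε)/σ2) = (u + hb*ε)/σ2 := by field_simp [hu]; ring
  have e2 : (1 + hb*Pb/σ2) = u/σ2 := by field_simp [hu]; linarith
  have e3 : (1 + ha*Pa/σ2) = v/σ2 := by field_simp [hv]; linarith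
  have e4 : (1 + ha*(Pa-ε)/σ2) = (v - ha*ε)/σ2 := by field_simp [hv]; ring
  rw [e1, e2, e3, e4] at key
  unfold Real.logb at key
  rw [div_sub_div_same, div_sub_div_same, div_le_div_iff_of_pos_right hL] at key
  rw [← Real.log_div (by positivity) (by positivity),
    ← Real.log_div (by positivity) (by positivity)] at key
  have r1 : (u + hb*ε)/σ2 / (u/σ2) = (u + hb*ε)/u := by field_simp
  have r2 : v/σ2 / ((v - ha*ε)/σ2) = v / (v - ha*ε) := by field_simp
  rw [r1, r2] at key
  have lb : 1 - u/(u + hb*ε) ≤ Real.log ((u + hb*ε)/u) := by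
    have h1 := Real.log_le_sub_one_of_pos (x := u/(u + hb*ε)) (by positivity)
    rw [Real.log_div (by positivity) (by positivity)] at h1 ⊢
    linarith
  have ub : Real.log (v/(v - ha*ε)) ≤ v/(v - ha*ε) - 1 :=
    Real.log_le_sub_one_of_pos (by positivity)
  have main : 1 - u/(u + hb*ε) ≤ v/(v - ha*ε) - 1 := by linarith
  have poly : hb * ε * (v - ha*ε) ≤ ha * ε * (u + hb*ε) := by
    have m1 : 1 - u/(u + hb*ε) = hb*ε/(u + hb*ε) := by field_simp; ring
    have m2 : v/(v - ha*ε) - 1 = ha*ε/(v - ha*ε) := by field_simp; ring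
    rw [m1, m2] at main
    rw [div_le_div_iff₀ hu' hv'] at main
    linarith
  have h5 : hb * v - ha * u ≤ 2 * ha * hb * ε := by nlinarith
  have h6 : 2 * ha * hb * ε ≤ δ := by
    rw [le_div_iff₀ (by positivity)] at hε3
    linarith
  linarith

def pert {M : ℕ} (Pstar : Fin M → ℝ) (a b : Fin M) (ε : ℝ) : Fin M → ℝ :=
  fun j => Pstar j + (if j = b then ε else 0) - (if j = a then ε else 0)

lemma pert_cum {M : ℕ} (τ : ℝ) (Pstar : Fin M → ℝ) (a b : Fin M) (ε : ℝ) (m : Fin M) :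
    ∑ j ∈ Finset.Iic m, τ * pert Pstar a b ε j =
      ∑ j ∈ Finset.Iic m, τ * Pstar j + (if b ≤ m then τ*ε else 0)
        - (if a ≤ m then τ*ε else 0) := by
  unfold pert
  simp only [mul_add, mul_sub, Finset.sum_add_distrib, Finset.sum_sub_distrib, mul_ite, mul_zero]
  rw [Finset.sum_ite_eq' (Finset.Iic m) b (fun _ => τ*ε),
      Finset.sum_ite_eq' (Finset.Iic m) a (fun _ => τ*ε)]
  simp [Finset.mem_Iic]

lemma pert_obj {M : ℕ} (σ2 : ℝ) (h Pstar : Fin M → ℝ) (a b : Fin M) (hab : a ≠ b) (ε : ℝ) :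
    ∑ j, Real.logb 2 (1 + h j * pert Pstar a b ε j / σ2) =
      ∑ j, Real.logb 2 (1 + h j * Pstar j / σ2)
        + (Real.logb 2 (1 + h b * (Pstar b + ε) / σ2) - Real.logb 2 (1 + h b * Pstar b / σ2))
        - (Real.logb 2 (1 + h a * Pstar a / σ2) - Real.logb 2 (1 + h a * (Pstar a - ε) / σ2)) := by
  have key : ∑ j, (Real.logb 2 (1 + h j * pert Pstar a b ε j / σ2)
      - Real.logb 2 (1 + h j * Pstar j / σ2)) =
      ∑ j ∈ ({a, b} : Finset (Fin M)), (Real.logb 2 (1 + h j * pert Pstar a b ε j / σ2)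
      - Real.logb 2 (1 + h j * Pstar j / σ2)) := by
    refine (Finset.sum_subset (Finset.subset_univ _) ?_).symm
    intro j _ hj
    simp only [Finset.mem_insert, Finset.mem_singleton, not_or] at hj
    unfold pert
    simp [hj.1, hj.2]
  rw [Finset.sum_pair hab] at key
  have pa : pert Pstar a b ε a = Pstar a - ε := by unfold pert; simp [hab]
  have pb : pert Pstar a b ε b = Pstar b + ε := by unfold pert; simp [hab.symm]
  rw [pa, pb, Finset.sum_sub_distrib] at key
  linarith

lemma claimA {M : ℕ} (τ σ2 : ℝ) (hτ : 0 < τ) (hσ : 0 < σ2)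
    (h : Fin M → ℝ) (hh : ∀ i, 0 < h i) (E : Fin M → ℝ)
    (Pstar : Fin M → ℝ) (hP0 : ∀ i, 0 ≤ Pstar i)
    (hPc : ∀ i, ∑ j ∈ Finset.Iic i, τ * Pstar j ≤ E i)
    (hopt : ∀ P : Fin M → ℝ,
      ((∀ i, 0 ≤ P i) ∧ ∀ i, ∑ j ∈ Finset.Iic i, τ * P j ≤ E i) →
      ∑ i, Real.logb 2 (1 + h i * P i / σ2) ≤
        ∑ i, Real.logb 2 (1 + h i * Pstar i / σ2))
    (a b : Fin M) (hab : a < b) (hPa : 0 < Pstar a) :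
    h b * (σ2 + h a * Pstar a) ≤ h a * (σ2 + h b * Pstar b) := by
  apply swap_key σ2 hσ (h a) (h b) (hh a) (hh b) _ _ hPa (hP0 b) 1 one_pos
  intro ε hε hεPa _
  have hab' : a ≠ b := ne_of_lt hab
  have hfeas' : (∀ i, 0 ≤ pert Pstar a b ε i) ∧
      ∀ m, ∑ j ∈ Finset.Iic m, τ * pert Pstar a b ε j ≤ E m := by
    constructor
    · intro j
      unfold pert
      rcases eq_or_ne j a with rfl | hja
      · simp [hab']; linarith
      · rcases eq_or_ne j b with rfl | hjb
        · simp [hja]; have := hP0 j; linarith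
        · simp [hja, hjb]; exact hP0 j
    · intro m
      rw [pert_cum]
      have hτε : 0 < τ * ε := mul_pos hτ hε
      by_cases hbm : b ≤ m
      · have ham : a ≤ m := le_trans hab.le hbm
        simp only [hbm, ham, if_true]
        have := hPc m; linarith
      · by_cases ham : a ≤ m
        · simp only [hbm, ham, if_true, if_false]
          have := hPc m; linarith
        · simp only [hbm, ham, if_false]
          have := hPc m; linarith
  have hv := hopt _ hfeas'
  rw [pert_obj σ2 h Pstar a b hab' ε] at hv
  linarith

lemma claimB {M : ℕ} (τ σ2 : ℝ) (hτ : 0 < τ) (hσ : 0 < σ2)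
    (h : Fin M → ℝ) (hh : ∀ i, 0 < h i) (E : Fin M → ℝ)
    (Pstar : Fin M → ℝ) (hP0 : ∀ i, 0 ≤ Pstar i)
    (hPc : ∀ i, ∑ j ∈ Finset.Iic i, τ * Pstar j ≤ E i)
    (hopt : ∀ P : Fin M → ℝ,
      ((∀ i, 0 ≤ P i) ∧ ∀ i, ∑ j ∈ Finset.Iic i, τ * P j ≤ E i) →
      ∑ i, Real.logb 2 (1 + h i * P i / σ2) ≤
        ∑ i, Real.logb 2 (1 + h i * Pstar i / σ2))
    (i k : Fin M) (hik : i < k) (hPk : 0 < Pstar k)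
    (ε0 : ℝ) (hε0 : 0 < ε0)
    (hslack : ∀ m, i ≤ m → m < k → ∑ j ∈ Finset.Iic m, τ * Pstar j + τ * ε0 ≤ E m) :
    h i * (σ2 + h k * Pstar k) ≤ h k * (σ2 + h i * Pstar i) := by
  apply swap_key σ2 hσ (h k) (h i) (hh k) (hh i) _ _ hPk (hP0 i) ε0 hε0
  intro ε hε hεPk hεε0
  have hab' : k ≠ i := (ne_of_lt hik).symm
  have hfeas' : (∀ j, 0 ≤ pert Pstar k i ε j) ∧
      ∀ m, ∑ j ∈ Finset.Iic m, τ * pert Pstar k i ε j ≤ E m := by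
    constructor
    · intro j
      unfold pert
      rcases eq_or_ne j k with rfl | hjk
      · simp [hab']; linarith
      · rcases eq_or_ne j i with rfl | hji
        · simp [hjk]; have := hP0 j; linarith
        · simp [hjk, hji]; exact hP0 j
    · intro m
      rw [pert_cum]
      have hτε : 0 < τ * ε := mul_pos hτ hε
      by_cases hkm : k ≤ m
      · have him : i ≤ m := le_trans hik.le hkm
        simp only [hkm, him, if_true]
        have := hPc m; linarith
      · by_cases him : i ≤ m
        · simp only [hkm, him, if_true, if_false]
          have hmk : m < k := lt_of_not_ge hkm
          have h1 := hslack m him hmk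
          have h2 : τ * ε ≤ τ * ε0 := by nlinarith
          linarith
        · simp only [hkm, him, if_false, add_zero]
          have := hPc m; linarith
  have hv := hopt _ hfeas'
  rw [pert_obj σ2 h Pstar k i hab' ε] at hv
  linarith

lemma claimC {M : ℕ} (τ σ2 : ℝ) (hτ : 0 < τ) (hσ : 0 < σ2)
    (h : Fin M → ℝ) (hh : ∀ i, 0 < h i) (E : Fin M → ℝ) (hEmono : Monotone E)
    (Pstar : Fin M → ℝ) (hP0 : ∀ i, 0 ≤ Pstar i)
    (hPc : ∀ i, ∑ j ∈ Finset.Iic i, τ * Pstar j ≤ E i)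
    (hopt : ∀ P : Fin M → ℝ,
      ((∀ i, 0 ≤ P i) ∧ ∀ i, ∑ j ∈ Finset.Iic i, τ * P j ≤ E i) →
      ∑ i, Real.logb 2 (1 + h i * P i / σ2) ≤
        ∑ i, Real.logb 2 (1 + h i * Pstar i / σ2))
    (i : Fin M) (hzero : ∀ j, i < j → Pstar j = 0)
    (hslackI : ∑ j ∈ Finset.Iic i, τ * Pstar j < E i) : False := by
  set ε : ℝ := (E i - ∑ j ∈ Finset.Iic i, τ * Pstar j) / τ with hεdef
  have hεpos : 0 < ε := div_pos (by linarith) hτ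
  set Q : Fin M → ℝ := fun j => Pstar j + (if j = i then ε else 0) with hQ
  have hQs : ∀ m, ∑ j ∈ Finset.Iic m, τ * Q j =
      ∑ j ∈ Finset.Iic m, τ * Pstar j + (if i ≤ m then τ*ε else 0) := by
    intro m
    simp only [hQ, mul_add, Finset.sum_add_distrib, mul_ite, mul_zero]
    rw [Finset.sum_ite_eq' (Finset.Iic m) i (fun _ => τ*ε)]
    simp [Finset.mem_Iic]
  have hcum_const : ∀ m, i ≤ m →
      ∑ j ∈ Finset.Iic m, τ * Pstar j = ∑ j ∈ Finset.Iic i, τ * Pstar j := by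
    intro m him
    have hsub : Finset.Iic i ⊆ Finset.Iic m := Finset.Iic_subset_Iic.mpr him
    have hd := Finset.sum_sdiff_eq_sub (f := fun j => τ * Pstar j) hsub
    have hz : ∑ j ∈ Finset.Iic m \ Finset.Iic i, τ * Pstar j = 0 := by
      apply Finset.sum_eq_zero
      intro j hj
      rw [Finset.mem_sdiff, Finset.mem_Iic, Finset.mem_Iic] at hj
      rw [hzero j (lt_of_not_ge hj.2)]; ring
    linarith
  have hfeas' : (∀ j, 0 ≤ Q j) ∧ ∀ m, ∑ j ∈ Finset.Iic m, τ * Q j ≤ E m := by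
    constructor
    · intro j
      rcases eq_or_ne j i with rfl | hji
      · simp [hQ]; have := hP0 j; linarith
      · simp [hQ, hji]; exact hP0 j
    · intro m
      rw [hQs m]
      by_cases him : i ≤ m
      · simp only [him, if_true]
        rw [hcum_const m him]
        have he : τ * ε = E i - ∑ j ∈ Finset.Iic i, τ * Pstar j := by
          rw [hεdef]; field_simp
        rw [he]
        have := hEmono him
        linarith
      · simp only [him, if_false, add_zero]
        exact hPc m
  have hv := hopt _ hfeas'
  have key : ∑ j, (Real.logb 2 (1 + h j * Q j / σ2) - Real.logb 2 (1 + h j * Pstar j / σ2)) =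
      ∑ j ∈ ({i} : Finset (Fin M)), (Real.logb 2 (1 + h j * Q j / σ2)
        - Real.logb 2 (1 + h j * Pstar j / σ2)) := by
    refine (Finset.sum_subset (Finset.subset_univ _) ?_).symm
    intro j _ hj
    rw [Finset.mem_singleton] at hj
    simp [hQ, hj]
  rw [Finset.sum_singleton, Finset.sum_sub_distrib] at key
  have hQi : Q i = Pstar i + ε := by simp [hQ]
  have hstrict : Real.logb 2 (1 + h i * Pstar i / σ2) <
      Real.logb 2 (1 + h i * Q i / σ2) := by
    apply Real.logb_lt_logb one_lt_two
    · have := hP0 i; have := (hh i).le; positivity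
    · rw [hQi]
      have e : h i * (Pstar i + ε) / σ2 = h i * Pstar i / σ2 + h i * ε / σ2 := by ring
      rw [e]
      linarith [div_pos (mul_pos (hh i) hεpos) hσ]
  linarith

theorem stmt_7 (M : ℕ) (τ σ2 : ℝ) (hτ : 0 < τ) (hσ : 0 < σ2)
    (h : Fin M → ℝ) (hh : ∀ i, 0 < h i)
    (E : Fin M → ℝ) (hE0 : ∀ i, 0 ≤ E i) (hEmono : Monotone E)
    (Pstar : Fin M → ℝ)
    (hfeas : (∀ i, 0 ≤ Pstar i) ∧
      ∀ i, ∑ j ∈ Finset.Iic i, τ * Pstar j ≤ E i)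
    (hopt : ∀ P : Fin M → ℝ,
      ((∀ i, 0 ≤ P i) ∧ ∀ i, ∑ j ∈ Finset.Iic i, τ * P j ≤ E i) →
      ∑ i, Real.logb 2 (1 + h i * P i / σ2) ≤
        ∑ i, Real.logb 2 (1 + h i * Pstar i / σ2)) :
    ∃ θ : Fin M → ℝ, (∀ i, 0 ≤ θ i) ∧
      (∀ i, Pstar i =
        max 0 (1 / (Real.log 2 * τ * ∑ j ∈ Finset.Ici i, θ j) - σ2 / h i)) ∧
      (∀ i, θ i * (∑ j ∈ Finset.Iic i, τ * Pstar j - E i) = 0) := by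
  obtain ⟨hP0, hPc⟩ := hfeas
  have hL : (0:ℝ) < Real.log 2 := Real.log_pos one_lt_two
  have hden : ∀ i, 0 < σ2 + h i * Pstar i := by
    intro i; nlinarith [mul_nonneg (hh i).le (hP0 i)]
  set c : Fin M → ℝ := fun i => h i / (Real.log 2 * τ * (σ2 + h i * Pstar i)) with hc_def
  have hcpos : ∀ i, 0 < c i := by
    intro i
    exact div_pos (hh i) (mul_pos (mul_pos hL hτ) (hden i))
  have hcA : ∀ a b : Fin M, a ≤ b → 0 < Pstar a → c b ≤ c a := by
    intro a b hab hPa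
    rcases eq_or_lt_of_le hab with rfl | hab'
    · exact le_rfl
    · have key := claimA τ σ2 hτ hσ h hh E Pstar hP0 hPc hopt a b hab' hPa
      simp only [hc_def]
      rw [div_le_div_iff₀ (mul_pos (mul_pos hL hτ) (hden b)) (mul_pos (mul_pos hL hτ) (hden a))]
      nlinarith [mul_pos hL hτ]
  set S : Fin M → ℝ := fun i => (Finset.Ici i).sup' ⟨i, Finset.mem_Ici.mpr le_rfl⟩ c with hS_def
  have hcS : ∀ i, c i ≤ S i := fun i => Finset.le_sup' c (Finset.mem_Ici.mpr le_rfl)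
  have hSpos : ∀ i, 0 < S i := fun i => lt_of_lt_of_le (hcpos i) (hcS i)
  have hSmono : ∀ i j : Fin M, i ≤ j → S j ≤ S i := by
    intro i j hij
    exact Finset.sup'_mono c (Finset.Ici_subset_Ici.mpr hij) ⟨j, Finset.mem_Ici.mpr le_rfl⟩
  set Sn : ℕ → ℝ := fun n => if hn : n < M then S ⟨n, hn⟩ else 0 with hSn_def
  set θ : Fin M → ℝ := fun i => Sn i.val - Sn (i.val + 1) with hθ_def
  have hSnval : ∀ i : Fin M, Sn i.val = S i := by
    intro i
    simp only [hSn_def]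
    rw [dif_pos i.isLt]
  have hSnM : Sn M = 0 := by simp [hSn_def]
  have hsum : ∀ i : Fin M, ∑ j ∈ Finset.Ici i, θ j = S i := by
    intro i
    have hMpos : 0 < M := i.pos
    have e1 : ∑ j ∈ Finset.Ici i, θ j
        = ∑ n ∈ (Finset.Ici i).map Fin.valEmbedding, (Sn n - Sn (n+1)) := by
      rw [Finset.sum_map]
      rfl
    have hM1 : M - 1 + 1 = M := by omega
    rw [e1, Fin.map_valEmbedding_Ici,
      Finset.sum_Ico_eq_sub _ i.isLt.le, Finset.sum_range_sub' Sn, Finset.sum_range_sub' Sn,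
      hSnM, hSnval i]
    ring
  have hθ0 : ∀ i, 0 ≤ θ i := by
    intro i
    simp only [hθ_def]
    by_cases h1 : i.val + 1 < M
    · have e2 : Sn (i.val+1) = S ⟨i.val+1, h1⟩ := by
        simp only [hSn_def]; rw [dif_pos h1]
      rw [hSnval i, e2]
      have : S ⟨i.val+1, h1⟩ ≤ S i := hSmono i ⟨i.val+1, h1⟩ (by simp only [Fin.le_def, Fin.val_mk]; omega)
      linarith
    · have e2 : Sn (i.val+1) = 0 := by simp only [hSn_def]; rw [dif_neg h1]
      rw [hSnval i, e2]
      linarith [hSpos i]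
  have hform : ∀ i, Pstar i = max 0 (1 / (Real.log 2 * τ * S i) - σ2 / h i) := by
    intro i
    rcases eq_or_lt_of_le (hP0 i) with hz | hpos
    · rw [← hz]
      symm
      rw [max_eq_left]
      have hci : c i = h i / (Real.log 2 * τ * σ2) := by
        simp only [hc_def]; rw [← hz]; ring_nf
      have h2 := hcS i
      rw [hci] at h2
      have h3 : h i ≤ Real.log 2 * τ * σ2 * S i := by
        rw [div_le_iff₀ (by positivity)] at h2
        nlinarith
      rw [sub_nonpos, div_le_div_iff₀ (mul_pos (mul_pos hL hτ) (hSpos i)) (hh i)]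
      nlinarith
    · have hSeq : S i = c i := by
        apply le_antisymm _ (hcS i)
        apply Finset.sup'_le
        intro b hb
        exact hcA i b (Finset.mem_Ici.mp hb) hpos
      rw [hSeq]
      have e3 : Real.log 2 * τ * c i = h i / (σ2 + h i * Pstar i) := by
        simp only [hc_def]
        rw [mul_div_assoc']
        exact mul_div_mul_left _ _ (ne_of_gt (mul_pos hL hτ))
      rw [e3, one_div_div]
      have e4 : (σ2 + h i * Pstar i) / h i - σ2 / h i = Pstar i := by
        field_simp [(hh i).ne']; ring
      rw [e4, max_eq_right (hP0 i)]
  have hcs : ∀ i, θ i = 0 ∨ ∑ j ∈ Finset.Iic i, τ * Pstar j = E i := by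
    intro i
    by_cases htight : ∑ j ∈ Finset.Iic i, τ * Pstar j = E i
    · right; exact htight
    left
    have hslack : ∑ j ∈ Finset.Iic i, τ * Pstar j < E i := lt_of_le_of_ne (hPc i) htight
    have hex : ∃ k : Fin M, i < k ∧ c i ≤ c k := by
      by_cases hpk : ∃ k, i < k ∧ 0 < Pstar k
      · set F := Finset.univ.filter (fun k => i < k ∧ 0 < Pstar k) with hF
        have hFne : F.Nonempty := by
          obtain ⟨k, hk⟩ := hpk
          exact ⟨k, by simp [hF, hk.1, hk.2]⟩
        set k := F.min' hFne with hk_def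
        have hkmem : k ∈ F := F.min'_mem hFne
        rw [hF, Finset.mem_filter] at hkmem
        obtain ⟨-, hik, hPk⟩ := hkmem
        have hmin : ∀ j, i < j → 0 < Pstar j → k ≤ j := by
          intro j hj1 hj2
          apply Finset.min'_le
          simp [hF, hj1, hj2]
        have hzero_mid : ∀ j, i < j → j < k → Pstar j = 0 := by
          intro j hj1 hj2
          by_contra hne
          have hpj : 0 < Pstar j := lt_of_le_of_ne (hP0 j) (Ne.symm hne)
          exact absurd (hmin j hj1 hpj) (not_le.mpr hj2)
        have hcum : ∀ m, i ≤ m → m < k →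
            ∑ j ∈ Finset.Iic m, τ * Pstar j = ∑ j ∈ Finset.Iic i, τ * Pstar j := by
          intro m him hmk
          have hsub : Finset.Iic i ⊆ Finset.Iic m := Finset.Iic_subset_Iic.mpr him
          have hd := Finset.sum_sdiff_eq_sub (f := fun j => τ * Pstar j) hsub
          have hz : ∑ j ∈ Finset.Iic m \ Finset.Iic i, τ * Pstar j = 0 := by
            apply Finset.sum_eq_zero
            intro j hj
            rw [Finset.mem_sdiff, Finset.mem_Iic, Finset.mem_Iic] at hj
            rw [hzero_mid j (lt_of_not_ge hj.2) (lt_of_le_of_lt hj.1 hmk)]; ring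
          linarith
        set ε0 := (E i - ∑ j ∈ Finset.Iic i, τ * Pstar j) / τ with hε0_def
        have hε0pos : 0 < ε0 := div_pos (by linarith) hτ
        have hslackB : ∀ m, i ≤ m → m < k →
            ∑ j ∈ Finset.Iic m, τ * Pstar j + τ * ε0 ≤ E m := by
          intro m him hmk
          rw [hcum m him hmk]
          have he : τ * ε0 = E i - ∑ j ∈ Finset.Iic i, τ * Pstar j := by
            rw [hε0_def]; field_simp
          rw [he]
          have := hEmono him
          linarith
        have key := claimB τ σ2 hτ hσ h hh E Pstar hP0 hPc hopt i k hik hPk ε0 hε0pos hslackB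
        refine ⟨k, hik, ?_⟩
        simp only [hc_def]
        rw [div_le_div_iff₀ (mul_pos (mul_pos hL hτ) (hden i)) (mul_pos (mul_pos hL hτ) (hden k))]
        nlinarith [mul_pos hL hτ]
      · exfalso
        push_neg at hpk
        apply claimC τ σ2 hτ hσ h hh E hEmono Pstar hP0 hPc hopt i _ hslack
        intro j hj
        exact le_antisymm (hpk j hj) (hP0 j)
    obtain ⟨k, hik, hcik⟩ := hex
    have h1lt : i.val + 1 < M := by
      have h5 := k.isLt
      have h6 : i.val < k.val := hik
      omega
    have hSeq : S i = S ⟨i.val + 1, h1lt⟩ := by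
      apply le_antisymm
      · apply Finset.sup'_le
        intro b hb
        rw [Finset.mem_Ici] at hb
        rcases eq_or_ne b i with rfl | hbi
        · calc c b ≤ c k := hcik
            _ ≤ S ⟨b.val + 1, h1lt⟩ := Finset.le_sup' c
                (Finset.mem_Ici.mpr (by simp only [Fin.le_def, Fin.val_mk]; exact hik))
        · have hib : (⟨i.val + 1, h1lt⟩ : Fin M) ≤ b := by
            have h7 : i < b := lt_of_le_of_ne hb (Ne.symm hbi)
            have h8 : i.val < b.val := h7
            simp only [Fin.le_def, Fin.val_mk]
            omega
          exact Finset.le_sup' c (Finset.mem_Ici.mpr hib)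
      · exact hSmono i ⟨i.val + 1, h1lt⟩ (by simp only [Fin.le_def, Fin.val_mk]; omega)
    simp only [hθ_def]
    rw [hSnval i, show Sn (i.val+1) = S ⟨i.val+1, h1lt⟩ from by
      simp only [hSn_def]; rw [dif_pos h1lt], hSeq]
    ring
  refine ⟨θ, hθ0, ?_, ?_⟩
  · intro i
    rw [hsum i]
    exact hform i
  · intro i
    rcases hcs i with h0 | ht
    · rw [h0, zero_mul]
    · rw [ht, sub_self, mul_zero]
end

section
/- For the single-user throughput maximization problem (maximize Σ_{i=1}^M log₂(1 + h·P_i/σ²) subject to energy causality Σ_{j=1}^i τP_j ≤ E_i with E_i nondecreasing, over a constant channel h_i = h > 0), any optimal power allocation is nondecreasing in i restricted to slots with positive power, and if E_i = E for all i (all energy available initially) then the optimal allocation is constant: P*_i = E/(Mτ) for all i. -/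
lemma sum_ite_pair {M : ℕ} (s : Finset (Fin M)) (i j : Fin M) (hij : i ≠ j)
    (f : Fin M → ℝ) (a b : ℝ) :
    ∑ k ∈ s, (if k = i then a else if k = j then b else f k)
      = ∑ k ∈ s, f k + (if i ∈ s then a - f i else 0)
        + (if j ∈ s then b - f j else 0) := by
  have hcongr : ∀ k ∈ s, (if k = i then a else if k = j then b else f k)
      = f k + ((if k = i then a - f i else 0) + (if k = j then b - f j else 0)) := by
    intro k _
    by_cases h1 : k = i
    · subst h1; simp [hij]
    · by_cases h2 : k = j
      · subst h2; simp [h1]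
      · simp [h1, h2]
  rw [Finset.sum_congr rfl hcongr, Finset.sum_add_distrib, Finset.sum_add_distrib,
    Finset.sum_ite_eq' s i (fun _ => a - f i), Finset.sum_ite_eq' s j (fun _ => b - f j)]
  ring

lemma sum_comp_ite {M : ℕ} (s : Finset (Fin M)) (i j : Fin M) (hij : i ≠ j)
    (g : ℝ → ℝ) (P : Fin M → ℝ) (m : ℝ) :
    ∑ k ∈ s, g (if k = i then m else if k = j then m else P k)
      = ∑ k ∈ s, g (P k) + (if i ∈ s then g m - g (P i) else 0)
        + (if j ∈ s then g m - g (P j) else 0) := by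
  rw [← sum_ite_pair s i j hij (fun k => g (P k)) (g m) (g m)]
  apply Finset.sum_congr rfl
  intro k _; split_ifs <;> rfl

lemma sum_comp_ite1 {M : ℕ} (s : Finset (Fin M)) (i : Fin M)
    (g : ℝ → ℝ) (P : Fin M → ℝ) (m : ℝ) :
    ∑ k ∈ s, g (if k = i then m else P k)
      = ∑ k ∈ s, g (P k) + (if i ∈ s then g m - g (P i) else 0) := by
  rw [← Finset.sum_ite_eq' s i (fun _ => g m - g (P i)), ← Finset.sum_add_distrib]
  apply Finset.sum_congr rfl
  intro k _; split_ifs with hk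
  · subst hk; ring
  · ring

lemma logb_avg_gt (h σ2 : ℝ) (hh : 0 < h) (hσ : 0 < σ2) (a b : ℝ)
    (ha : 0 ≤ a) (hb : 0 ≤ b) (hab : a ≠ b) :
    Real.logb 2 (1 + h * a / σ2) + Real.logb 2 (1 + h * b / σ2)
      < 2 * Real.logb 2 (1 + h * ((a + b) / 2) / σ2) := by
  have hx : (0:ℝ) < 1 + h * a / σ2 := by positivity
  have hy : (0:ℝ) < 1 + h * b / σ2 := by positivity
  have hxy : 1 + h * a / σ2 ≠ 1 + h * b / σ2 := by
    intro hE
    apply hab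
    field_simp at hE
    exact mul_left_cancel₀ hh.ne' (by linarith)
  have key := strictConcaveOn_log_Ioi.2 (Set.mem_Ioi.mpr hx) (Set.mem_Ioi.mpr hy) hxy
    (by norm_num : (0:ℝ) < 1/2) (by norm_num : (0:ℝ) < 1/2) (by norm_num)
  simp only [smul_eq_mul] at key
  have hmid : (1/2) * (1 + h * a / σ2) + (1/2) * (1 + h * b / σ2)
      = 1 + h * ((a + b) / 2) / σ2 := by ring
  rw [hmid] at key
  have hL : (0:ℝ) < Real.log 2 := Real.log_pos one_lt_two
  rw [Real.logb, Real.logb, Real.logb]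
  rw [← add_div, show (2:ℝ) * (Real.log (1 + h * ((a+b)/2) / σ2) / Real.log 2)
      = (2 * Real.log (1 + h * ((a+b)/2) / σ2)) / Real.log 2 by ring]
  gcongr
  linarith

theorem stmt_8 (M : ℕ) (hM : 0 < M) (τ h σ2 : ℝ)
    (hτ : 0 < τ) (hh : 0 < h) (hσ : 0 < σ2)
    (E : Fin M → ℝ) (hEmono : Monotone E)
    (Pstar : Fin M → ℝ)
    (hfeas : (∀ i, 0 ≤ Pstar i) ∧
      ∀ i, ∑ j ∈ Finset.Iic i, τ * Pstar j ≤ E i)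
    (hopt : ∀ P : Fin M → ℝ,
      ((∀ i, 0 ≤ P i) ∧ ∀ i, ∑ j ∈ Finset.Iic i, τ * P j ≤ E i) →
      ∑ i, Real.logb 2 (1 + h * P i / σ2) ≤
        ∑ i, Real.logb 2 (1 + h * Pstar i / σ2)) :
    (∀ i j : Fin M, i ≤ j → 0 < Pstar i → 0 < Pstar j → Pstar i ≤ Pstar j) ∧
    (∀ Etot : ℝ, (∀ i, E i = Etot) → ∀ i, Pstar i = Etot / (M * τ)) := by
  obtain ⟨hP0, hPc⟩ := hfeas
  constructor
  · -- Part 1: monotone on positive slots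
    intro i j hij hi hj
    by_contra hcon
    push_neg at hcon
    have hne : Pstar i ≠ Pstar j := ne_of_gt hcon
    have hij' : i ≠ j := by
      intro e; rw [e] at hcon; exact lt_irrefl _ hcon
    set m : ℝ := (Pstar i + Pstar j) / 2 with hm
    have hm0 : 0 ≤ m := by have := hP0 i; have := hP0 j; positivity
    have hmi : m < Pstar i := by simp only [hm]; linarith
    -- Q's feasibility
    have hfeasQ : (∀ k, 0 ≤ (fun k => if k = i then m else if k = j then m else Pstar k) k) ∧
        ∀ n, ∑ k ∈ Finset.Iic n,
          τ * (fun k => if k = i then m else if k = j then m else Pstar k) k ≤ E n := by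
      constructor
      · intro k; dsimp only; split_ifs
        · exact hm0
        · exact hm0
        · exact hP0 k
      · intro n
        dsimp only
        rw [sum_comp_ite (Finset.Iic n) i j hij' (fun t => τ * t) Pstar m]
        simp only [Finset.mem_Iic]
        by_cases hjn : j ≤ n
        · have hin : i ≤ n := le_trans hij hjn
          rw [if_pos hin, if_pos hjn]
          have : τ * m - τ * Pstar i + (τ * m - τ * Pstar j) = 0 := by
            simp only [hm]; ring
          have hn := hPc n
          linarith
        · by_cases hin : i ≤ n
          · rw [if_pos hin, if_neg hjn]
            have hn := hPc n
            have : τ * m - τ * Pstar i < 0 := by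
              have := mul_lt_mul_of_pos_left hmi hτ; linarith
            linarith
          · rw [if_neg hin, if_neg hjn]
            have hn := hPc n
            linarith
    have hle := hopt _ hfeasQ
    rw [sum_comp_ite Finset.univ i j hij' (fun t => Real.logb 2 (1 + h * t / σ2)) Pstar m]
      at hle
    simp only [Finset.mem_univ, if_pos] at hle
    have hconc := logb_avg_gt h σ2 hh hσ (Pstar i) (Pstar j) (hP0 i) (hP0 j) hne
    rw [← hm] at hconc
    linarith
  · -- Part 2: constant E implies flat allocation
    intro Etot hE i
    have hlastmem : M - 1 < M := by omega
    have hlast : Finset.Iic (⟨M - 1, hlastmem⟩ : Fin M) = Finset.univ := by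
      apply Finset.eq_univ_iff_forall.mpr
      intro k
      simp only [Finset.mem_Iic, Fin.le_def]
      omega
    have htot : ∑ k, τ * Pstar k ≤ Etot := by
      have := hPc ⟨M - 1, hlastmem⟩
      rw [hlast, hE] at this
      exact this
    -- Step 1: Pstar is constant
    have hconst : ∀ a b : Fin M, Pstar a = Pstar b := by
      intro a b
      by_contra hne
      have hab : a ≠ b := by intro e; rw [e] at hne; exact hne rfl
      set m : ℝ := (Pstar a + Pstar b) / 2 with hm
      have hm0 : 0 ≤ m := by have := hP0 a; have := hP0 b; positivity
      have hQ0 : ∀ k, 0 ≤ (fun k => if k = a then m else if k = b then m else Pstar k) k := by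
        intro k; dsimp only; split_ifs
        · exact hm0
        · exact hm0
        · exact hP0 k
      have hQtot : ∑ k, τ * (fun k => if k = a then m else if k = b then m else Pstar k) k
          = ∑ k, τ * Pstar k := by
        rw [sum_comp_ite Finset.univ a b hab (fun t => τ * t) Pstar m]
        simp only [Finset.mem_univ, if_pos]
        simp only [hm]; ring
      have hfeasQ : (∀ k, 0 ≤ (fun k => if k = a then m else if k = b then m else Pstar k) k) ∧
          ∀ n, ∑ k ∈ Finset.Iic n,
            τ * (fun k => if k = a then m else if k = b then m else Pstar k) k ≤ E n := by
      
        refine ⟨hQ0, fun n => ?_⟩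
        have hsub : ∑ k ∈ Finset.Iic n,
            τ * (fun k => if k = a then m else if k = b then m else Pstar k) k
            ≤ ∑ k, τ * (fun k => if k = a then m else if k = b then m else Pstar k) k := by
          apply Finset.sum_le_sum_of_subset_of_nonneg (Finset.subset_univ _)
          intro k _ _
          exact mul_nonneg hτ.le (hQ0 k)
        rw [hE n]
        calc _ ≤ _ := hsub
        _ = ∑ k, τ * Pstar k := hQtot
        _ ≤ Etot := htot
      have hle := hopt _ hfeasQ
      rw [sum_comp_ite Finset.univ a b hab (fun t => Real.logb 2 (1 + h * t / σ2)) Pstar m]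
        at hle
      simp only [Finset.mem_univ, if_pos] at hle
      have hconc := logb_avg_gt h σ2 hh hσ (Pstar a) (Pstar b) (hP0 a) (hP0 b) hne
      rw [← hm] at hconc
      linarith
    -- Step 2: total energy is used
    have htot' : ∑ k, τ * Pstar k = Etot := by
      by_contra hneq
      have hlt : ∑ k, τ * Pstar k < Etot := lt_of_le_of_ne htot hneq
      set i0 : Fin M := ⟨0, hM⟩ with hi0
      set δ : ℝ := (Etot - ∑ k, τ * Pstar k) / τ with hδ
      have hδpos : 0 < δ := by
        apply div_pos _ hτ; linarith
      have hQ0 : ∀ k, 0 ≤ (fun k => if k = i0 then Pstar i0 + δ else Pstar k) k := by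
        intro k; dsimp only; split_ifs
        · have := hP0 i0; linarith
        · exact hP0 k
      have hQtot : ∑ k, τ * (fun k => if k = i0 then Pstar i0 + δ else Pstar k) k
          = ∑ k, τ * Pstar k + τ * δ := by
        rw [sum_comp_ite1 Finset.univ i0 (fun t => τ * t) Pstar (Pstar i0 + δ)]
        simp only [Finset.mem_univ, if_pos]
        ring
      have hτδ : τ * δ = Etot - ∑ k, τ * Pstar k := by
        rw [hδ]; field_simp
      have hfeasQ : (∀ k, 0 ≤ (fun k => if k = i0 then Pstar i0 + δ else Pstar k) k) ∧
          ∀ n, ∑ k ∈ Finset.Iic n,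
            τ * (fun k => if k = i0 then Pstar i0 + δ else Pstar k) k ≤ E n := by
        refine ⟨hQ0, fun n => ?_⟩
        have hsub : ∑ k ∈ Finset.Iic n,
            τ * (fun k => if k = i0 then Pstar i0 + δ else Pstar k) k
            ≤ ∑ k, τ * (fun k => if k = i0 then Pstar i0 + δ else Pstar k) k := by
          apply Finset.sum_le_sum_of_subset_of_nonneg (Finset.subset_univ _)
          intro k _ _
          exact mul_nonneg hτ.le (hQ0 k)
        rw [hE n]
        calc _ ≤ _ := hsub
        _ = ∑ k, τ * Pstar k + τ * δ := hQtot
        _ = Etot := by rw [hτδ]; ring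
      have hle := hopt _ hfeasQ
      rw [sum_comp_ite1 Finset.univ i0 (fun t => Real.logb 2 (1 + h * t / σ2)) Pstar
        (Pstar i0 + δ)] at hle
      simp only [Finset.mem_univ, if_pos] at hle
      have hmono : Real.logb 2 (1 + h * Pstar i0 / σ2)
          < Real.logb 2 (1 + h * (Pstar i0 + δ) / σ2) := by
        have hp := hP0 i0
        apply Real.logb_lt_logb one_lt_two (by positivity)
        have h1 : h * Pstar i0 / σ2 < h * (Pstar i0 + δ) / σ2 := by
          apply div_lt_div_of_pos_right _ hσ
          nlinarith
        linarith
      linarith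
    -- Conclude
    have hsum : ∑ k, τ * Pstar k = M * (τ * Pstar i) := by
      rw [Finset.sum_congr rfl (fun k _ => by rw [hconst k i])]
      simp [Finset.card_univ, mul_comm]
    rw [hsum] at htot'
    have hMτ : (M : ℝ) * τ ≠ 0 := by positivity
    field_simp
    linarith [htot']
end
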